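/- Let G be a finitely generated pro-p group and f: M → N a morphism of complete Z_p[[G]]-modules. If Tor_q^{Z_p[[G]]}(F_p, f) is an isomorphism for q = 0 and surjective for q = 1, then f is an isomorphism. -/

import Mathlib

noncomputable section

variable (p : ℕ) [Fact p.Prime]
variable (G : Type) [Group G] [TopologicalSpace G] [IsTopologicalGroup G]
  [CompactSpace G] [TotallyDisconnectedSpace G]

/-- The component ring `Z/p^{n+1}[G/N]` of the completed group ring
`Z_p[[G]] = lim_{U,n} Z_p/(p^n)[G/U]`. -/
abbrev CGRComponent (n : ℕ) (N : OpenNormalSubgroup G) : Type :=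
  MonoidAlgebra (ZMod (p ^ (n + 1))) (G ⧸ (N : Subgroup G))

/-- The transition ring homomorphisms of the inverse system defining `Z_p[[G]]`. -/
def CGRtransition {n m : ℕ} (h : n ≤ m) {N M : OpenNormalSubgroup G}
    (hNM : (M : Subgroup G) ≤ (N : Subgroup G)) :
    CGRComponent p G m M →+* CGRComponent p G n N :=
  MonoidAlgebra.liftNCRingHom
    (MonoidAlgebra.singleOneRingHom.comp
      (ZMod.castHom (pow_dvd_pow p (by omega : n + 1 ≤ m + 1)) (ZMod (p ^ (n + 1)))))
    ((MonoidAlgebra.of (ZMod (p ^ (n + 1))) (G ⧸ (N : Subgroup G))).comp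
      (QuotientGroup.map (M : Subgroup G) (N : Subgroup G) (MonoidHom.id G) hNM))
    (fun _ _ => by
      show Commute (MonoidAlgebra.single 1 _) (MonoidAlgebra.single _ 1)
      unfold Commute SemiconjBy
      rw [MonoidAlgebra.single_mul_single, MonoidAlgebra.single_mul_single]
      simp)

/-- The completed group ring `Z_p[[G]] = lim_{U,n} Z_p/(p^n)[G/U]` of a profinite
group `G`, realized as the subring of compatible families in the product of the
component rings `Z/p^{n+1}[G/N]`, `N` running over the open normal subgroups. -/
def CompletedGroupRing :
    Subring (∀ (n : ℕ) (N : OpenNormalSubgroup G), CGRComponent p G n N) where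
  carrier := {x | ∀ (n m : ℕ) (h : n ≤ m) (N M : OpenNormalSubgroup G)
    (hNM : (M : Subgroup G) ≤ (N : Subgroup G)),
      CGRtransition p G h hNM (x m M) = x n N}
  mul_mem' := fun hx hy n m h N M hNM => by
    simp only [Pi.mul_apply, map_mul, hx n m h N M hNM, hy n m h N M hNM]
  one_mem' := fun n m h N M hNM => by simp only [Pi.one_apply, map_one]
  add_mem' := fun hx hy n m h N M hNM => by
    simp only [Pi.add_apply, map_add, hx n m h N M hNM, hy n m h N M hNM]
  zero_mem' := fun n m h N M hNM => by simp only [Pi.zero_apply, map_zero]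
  neg_mem' := fun hx n m h N M hNM => by
    simp only [Pi.neg_apply, map_neg, hx n m h N M hNM]

/-- The top open normal subgroup. -/
def topONS : OpenNormalSubgroup G :=
  { toOpenSubgroup := (⊤ : OpenSubgroup G),
    isNormal' := inferInstanceAs (⊤ : Subgroup G).Normal }

/-- The augmentation of a monoid algebra. -/
def monoidAlgebraAug (R H : Type*) [CommRing R] [Monoid H] :
    MonoidAlgebra R H →+* R :=
  MonoidAlgebra.liftNCRingHom (RingHom.id R) 1 (fun _ _ => Commute.all _ _)

/-- The augmentation `Z_p[[G]] → F_p`. -/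
def CGRaugmentation : ↥(CompletedGroupRing p G) →+* ZMod p :=
  (ZMod.castHom (dvd_pow_self p one_ne_zero) (ZMod p)).comp
    ((monoidAlgebraAug (ZMod (p ^ (0 + 1))) (G ⧸ ((topONS G : OpenNormalSubgroup G) : Subgroup G))).comp
      ((Pi.evalRingHom (fun N : OpenNormalSubgroup G => CGRComponent p G 0 N)
          (topONS G)).comp
        ((Pi.evalRingHom (fun n => ∀ N : OpenNormalSubgroup G, CGRComponent p G n N)
            0).comp (CompletedGroupRing p G).subtype)))

/-- The augmentation ideal `I = ker(Z_p[[G]] → F_p)`. -/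
def augIdeal : Ideal ↥(CompletedGroupRing p G) :=
  RingHom.ker (CGRaugmentation p G)

/-- Iterated action of an ideal on a module: `smulPow I M n` is `IⁿM`. -/
def smulPow {A : Type*} [Ring A] (I : Ideal A) (M : Type*) [AddCommGroup M]
    [Module A M] : ℕ → Submodule A M
  | 0 => ⊤
  | (n + 1) => Submodule.span A {x : M | ∃ a ∈ I, ∃ m ∈ smulPow I M n, x = a • m}

/-- A module `M` over `A` is `I`-adically complete if the natural map
`M → lim_n M/IⁿM` is an isomorphism, i.e. `M` is Hausdorff and precomplete for the
`I`-adic filtration. -/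
def IsCompleteMod {A : Type*} [Ring A] (I : Ideal A) (M : Type*) [AddCommGroup M]
    [Module A M] : Prop :=
  (∀ x : M, (∀ n, x ∈ smulPow I M n) → x = 0) ∧
    (∀ f : ℕ → M, (∀ n, f (n + 1) - f n ∈ smulPow I M n) →
      ∃ L : M, ∀ n, L - f n ∈ smulPow I M n)

/-- `G` is a pro-`p` group: every (open normal) finite quotient has `p`-power order. -/
def IsProP : Prop :=
  ∀ N : OpenNormalSubgroup G, ∃ k : ℕ, Nat.card (G ⧸ (N : Subgroup G)) = p ^ k

/-- `G` is topologically finitely generated. -/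
def IsTopFG : Prop :=
  ∃ S : Finset G, Dense ((Subgroup.closure (S : Set G) : Subgroup G) : Set G)

end

noncomputable section

namespace TorSetup

variable {A : Type*} [Ring A] (I : Ideal A)

/-- `F_p ⊗_A X`, i.e. `X/IX`, where `F_p = A/I` is viewed as a right `A`-module via the
augmentation with kernel `I`. -/
abbrev TorZeroObj (X : Type*) [AddCommGroup X] [Module A X] :=
  X ⧸ smulPow I X 1

lemma smulPow_one_le_comap {X Y : Type*} [AddCommGroup X] [Module A X]
    [AddCommGroup Y] [Module A Y] (f : X →ₗ[A] Y) :
    smulPow I X 1 ≤ (smulPow I Y 1).comap f := by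
  show Submodule.span A _ ≤ _
  rw [Submodule.span_le]
  rintro x ⟨a, ha, m, -, rfl⟩
  rw [SetLike.mem_coe, Submodule.mem_comap, map_smul]
  exact Submodule.subset_span ⟨a, ha, f m, Submodule.mem_top, rfl⟩

/-- The map `Tor₀(F_p, f) = F_p ⊗ f : X/IX → Y/IY` induced by `f`. -/
def torZeroMap {X Y : Type*} [AddCommGroup X] [Module A X] [AddCommGroup Y]
    [Module A Y] (f : X →ₗ[A] Y) : TorZeroObj I X →ₗ[A] TorZeroObj I Y :=
  Submodule.mapQ _ _ f (smulPow_one_le_comap I f)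

/-- The canonical free cover `A^{(X)} → X`. -/
def freeCover (X : Type*) [AddCommGroup X] [Module A X] : (X →₀ A) →ₗ[A] X :=
  Finsupp.linearCombination A (id : X → X)

/-- The canonical syzygy module `K_X = ker(A^{(X)} → X)`. -/
def syzygy (X : Type*) [AddCommGroup X] [Module A X] : Submodule A (X →₀ A) :=
  LinearMap.ker (freeCover X)

/-- Functoriality of the canonical free cover. -/
def freeMap {X Y : Type*} [AddCommGroup X] [Module A X] [AddCommGroup Y]
    [Module A Y] (f : X →ₗ[A] Y) : (X →₀ A) →ₗ[A] (Y →₀ A) :=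
  Finsupp.lmapDomain A A ⇑f

lemma freeMap_syzygy {X Y : Type*} [AddCommGroup X] [Module A X] [AddCommGroup Y]
    [Module A Y] (f : X →ₗ[A] Y) :
    ∀ x ∈ syzygy X, freeMap f x ∈ syzygy Y := by
  intro x hx
  have hcomp := Finsupp.lmapDomain_linearCombination (R := A) (v := (id : X → X))
    (v' := (id : Y → Y)) ⇑f f (fun i => rfl)
  have : freeCover Y (freeMap f x) = f (freeCover X x) := by
    have := congrArg (fun g => g x) hcomp
    simpa [freeCover, freeMap] using this
  simp only [syzygy, LinearMap.mem_ker] at hx ⊢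
  rw [this, hx, map_zero]

/-- The induced map of syzygies. -/
def syzygyMap {X Y : Type*} [AddCommGroup X] [Module A X] [AddCommGroup Y]
    [Module A Y] (f : X →ₗ[A] Y) :
    ↥(syzygy (A := A) X) →ₗ[A] ↥(syzygy (A := A) Y) :=
  (freeMap f).restrict (freeMap_syzygy f)

/-- The comparison map `K_X/IK_X → A^{(X)}/I·A^{(X)}` whose kernel is
`Tor₁(F_p, X)` (computed from the canonical presentation
`0 → K_X → A^{(X)} → X → 0`, using that `A^{(X)}` is free). -/
def torOneCompare (X : Type*) [AddCommGroup X] [Module A X] :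
    TorZeroObj I ↥(syzygy (A := A) X) →ₗ[A] TorZeroObj I (X →₀ A) :=
  torZeroMap I (syzygy (A := A) X).subtype

/-- `Tor₁^A(F_p, X) = ker(K_X/IK_X → A^{(X)}/I·A^{(X)})`. -/
def torOne (X : Type*) [AddCommGroup X] [Module A X] :
    Submodule A (TorZeroObj I ↥(syzygy (A := A) X)) :=
  LinearMap.ker (torOneCompare I X)

/-- The map `Tor₁(F_p, f)` induced by `f : X → Y`. -/
def torOneMap {X Y : Type*} [AddCommGroup X] [Module A X] [AddCommGroup Y]
    [Module A Y] (f : X →ₗ[A] Y) : ↥(torOne I X) →ₗ[A] ↥(torOne I Y) :=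
  (torZeroMap I (syzygyMap f)).restrict
    (by
      intro x hx
      obtain ⟨k, rfl⟩ := Submodule.Quotient.mk_surjective _ x
      simp only [torOne, LinearMap.mem_ker, torOneCompare, torZeroMap,
        Submodule.mapQ_apply] at hx ⊢
      rw [Submodule.Quotient.mk_eq_zero] at hx ⊢
      have hval : ((syzygy (A := A) Y).subtype) (syzygyMap f k)
          = freeMap f ((syzygy (A := A) X).subtype k) := rfl
      rw [hval]
      exact smulPow_one_le_comap I (freeMap f) hx)

end TorSetup

open TorSetup

section AuxLemmas

variable {A : Type*} [Ring A] (I : Ideal A)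

lemma smulPow_zero' (M : Type*) [AddCommGroup M] [Module A M] :
    smulPow I M 0 = ⊤ := rfl

lemma smulPow_succ' (M : Type*) [AddCommGroup M] [Module A M] (n : ℕ) :
    smulPow I M (n + 1) =
      Submodule.span A {x : M | ∃ a ∈ I, ∃ m ∈ smulPow I M n, x = a • m} := rfl

variable {M N : Type*} [AddCommGroup M] [Module A M] [AddCommGroup N] [Module A N]

lemma apply_mem_smulPow (g : M →ₗ[A] N) :
    ∀ n, ∀ x ∈ smulPow I M n, g x ∈ smulPow I N n := by
  intro n
  induction n with
  | zero => intro x _; exact Submodule.mem_top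
  | succ n ih =>
    intro x hx
    rw [smulPow_succ'] at hx ⊢
    induction hx using Submodule.span_induction with
    | mem y hy =>
      obtain ⟨a, ha, m, hm, rfl⟩ := hy
      rw [map_smul]
      exact Submodule.subset_span ⟨a, ha, g m, ih m hm, rfl⟩
    | zero => simp
    | add y z _ _ hy hz => rw [map_add]; exact add_mem hy hz
    | smul c y _ hy => rw [map_smul]; exact Submodule.smul_mem _ c hy

end AuxLemmas

section SurjLemma

variable {A : Type*} [Ring A] (I : Ideal A)
variable {M N : Type*} [AddCommGroup M] [Module A M] [AddCommGroup N] [Module A N]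

lemma surj_of_step (f : M →ₗ[A] N)
    (hMc : ∀ g : ℕ → M, (∀ n, g (n + 1) - g n ∈ smulPow I M n) →
      ∃ L : M, ∀ n, L - g n ∈ smulPow I M n)
    (hNh : ∀ x : N, (∀ n, x ∈ smulPow I N n) → x = 0)
    (hstep : ∀ y : N, ∃ m : M, y - f m ∈ smulPow I N 1) :
    Function.Surjective f := by
  have S2 : ∀ n, ∀ y ∈ smulPow I N n,
      ∃ m ∈ smulPow I M n, y - f m ∈ smulPow I N (n + 1) := by
    intro n
    induction n with
    | zero =>
      intro y _
      obtain ⟨m, hm⟩ := hstep y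
      exact ⟨m, Submodule.mem_top, hm⟩
    | succ n ih =>
      intro y hy
      rw [smulPow_succ'] at hy
      induction hy using Submodule.span_induction with
      | mem z hz =>
        obtain ⟨a, ha, y', hy', rfl⟩ := hz
        obtain ⟨m, hm, hdiff⟩ := ih y' hy'
        refine ⟨a • m, ?_, ?_⟩
        · rw [smulPow_succ']
          exact Submodule.subset_span ⟨a, ha, m, hm, rfl⟩
        · rw [map_smul, ← smul_sub, smulPow_succ']
          exact Submodule.subset_span ⟨a, ha, _, hdiff, rfl⟩
      | zero => exact ⟨0, Submodule.zero_mem _, by simp⟩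
      | add y z _ _ hy hz =>
        obtain ⟨m1, hm1, h1⟩ := hy
        obtain ⟨m2, hm2, h2⟩ := hz
        refine ⟨m1 + m2, Submodule.add_mem _ hm1 hm2, ?_⟩
        have e : y + z - f (m1 + m2) = (y - f m1) + (z - f m2) := by
          rw [map_add]; abel
        rw [e]; exact add_mem h1 h2
      | smul c y _ hy =>
        obtain ⟨m, hm, h1⟩ := hy
        refine ⟨c • m, Submodule.smul_mem _ c hm, ?_⟩
        rw [map_smul, ← smul_sub]
        exact Submodule.smul_mem _ c h1
  choose step hstep1 hstep2 using S2
  intro y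
  let g : ∀ n : ℕ, {m : M // y - f m ∈ smulPow I N n} := fun n =>
    Nat.rec ⟨0, Submodule.mem_top⟩
      (fun n ih => ⟨ih.1 + step n (y - f ih.1) ih.2, by
        rw [map_add, sub_add_eq_sub_sub]
        exact hstep2 n _ ih.2⟩) n
  have hdiff : ∀ n, (g (n + 1)).1 - (g n).1 ∈ smulPow I M n := by
    intro n
    have e : (g (n + 1)).1 = (g n).1 + step n (y - f (g n).1) (g n).2 := rfl
    rw [e, add_sub_cancel_left]
    exact hstep1 n _ (g n).2
  obtain ⟨L, hL⟩ := hMc (fun n => (g n).1) hdiff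
  refine ⟨L, ?_⟩
  have hmem : ∀ n, y - f L ∈ smulPow I N n := by
    intro n
    have h1 : y - f (g n).1 ∈ smulPow I N n := (g n).2
    have h2 : f (L - (g n).1) ∈ smulPow I N n :=
      apply_mem_smulPow I f n _ (hL n)
    have e : y - f L = (y - f (g n).1) - f (L - (g n).1) := by
      rw [map_sub]; abel
    rw [e]; exact sub_mem h1 h2
  exact (sub_eq_zero.mp (hNh _ hmem)).symm

end SurjLemma

section InjLemma

variable {A : Type*} [Ring A] (I : Ideal A)

lemma freeCover_freeMap' {M N : Type*} [AddCommGroup M] [Module A M]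
    [AddCommGroup N] [Module A N] (f : M →ₗ[A] N) (u : M →₀ A) :
    freeCover N (freeMap f u) = f (freeCover M u) := by
  have hcomp := Finsupp.lmapDomain_linearCombination (R := A) (v := (id : M → M))
    (v' := (id : N → N)) ⇑f f (fun i => rfl)
  have := congrArg (fun g => g u) hcomp
  simpa [freeCover, freeMap] using this

lemma lands_in_span {X M N : Type*} [AddCommGroup X] [Module A X]
    [AddCommGroup M] [Module A M] [AddCommGroup N] [Module A N]
    (f : M →ₗ[A] N) (h : X →ₗ[A] M) (hker : ∀ u, f (h u) = 0) :
    ∀ u ∈ smulPow I X 1, h u ∈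
      Submodule.span A {x : M | ∃ a ∈ I, ∃ k ∈ LinearMap.ker f, x = a • k} := by
  intro u hu
  rw [smulPow_succ'] at hu
  induction hu using Submodule.span_induction with
  | mem z hz =>
    obtain ⟨a, ha, m, _, rfl⟩ := hz
    rw [map_smul]
    exact Submodule.subset_span ⟨a, ha, h m, LinearMap.mem_ker.mpr (hker m), rfl⟩
  | zero => simp
  | add y z _ _ hy hz => rw [map_add]; exact add_mem hy hz
  | smul c y _ hy => rw [map_smul]; exact Submodule.smul_mem _ c hy

set_option maxHeartbeats 1000000 in
lemma inj_of_tor {M N : Type*} [AddCommGroup M] [Module A M]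
    [AddCommGroup N] [Module A N] (f : M →ₗ[A] N)
    (hMh : ∀ x : M, (∀ n, x ∈ smulPow I M n) → x = 0)
    (h0 : Function.Bijective (torZeroMap I f))
    (h1 : Function.Surjective (torOneMap I f))
    (hfs : Function.Surjective f) :
    Function.Injective f := by
  set J : Submodule A M :=
    Submodule.span A {x : M | ∃ a ∈ I, ∃ k ∈ LinearMap.ker f, x = a • k} with hJdef
  -- the section of f
  obtain ⟨gsec, hgsec⟩ : ∃ g : N → M, ∀ y, f (g y) = y :=
    ⟨Function.surjInv hfs, Function.surjInv_eq hfs⟩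
  set σ : (N →₀ A) →ₗ[A] (M →₀ A) := Finsupp.lmapDomain A A gsec with hσdef
  have hσ : ∀ u, freeMap f (σ u) = u := by
    intro u
    show Finsupp.mapDomain ⇑f (Finsupp.mapDomain gsec u) = u
    rw [← Finsupp.mapDomain_comp]
    have e : ⇑f ∘ gsec = id := funext hgsec
    rw [e, Finsupp.mapDomain_id]
  set π : (M →₀ A) →ₗ[A] (M →₀ A) := LinearMap.id - σ.comp (freeMap f) with hπdef
  have hπker : ∀ u, freeMap f (π u) = 0 := by
    intro u
    have : π u = u - σ (freeMap f u) := rfl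
    rw [this, map_sub, hσ, sub_self]
  -- key claim: ker f ⊆ I · ker f
  have hJ : ∀ x : M, f x = 0 → x ∈ J := by
    intro x hfx
    -- step 1: x ∈ IM
    have hx1 : x ∈ smulPow I M 1 := by
      have h : torZeroMap I f (Submodule.Quotient.mk x) = 0 := by
        simp only [torZeroMap, Submodule.mapQ_apply, hfx]
        exact (Submodule.Quotient.mk_eq_zero _).mpr (Submodule.zero_mem _)
      have h2 : (Submodule.Quotient.mk x : TorZeroObj I M) = 0 :=
        h0.1 (by rw [h, map_zero])
      exact (Submodule.Quotient.mk_eq_zero _).mp h2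
    -- step 2: lift to t ∈ I·(M →₀ A)
    have hlift : ∀ x ∈ smulPow I M 1,
        ∃ t ∈ smulPow I (M →₀ A) 1, freeCover M t = x := by
      intro x hx
      rw [smulPow_succ'] at hx
      induction hx using Submodule.span_induction with
      | mem z hz =>
        obtain ⟨a, ha, m, _, rfl⟩ := hz
        refine ⟨a • Finsupp.single m 1, ?_, ?_⟩
        · rw [smulPow_succ']
          exact Submodule.subset_span ⟨a, ha, _, Submodule.mem_top, rfl⟩
        · rw [map_smul]
          simp [freeCover]
      | zero => exact ⟨0, Submodule.zero_mem _, map_zero _⟩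
      | add y z _ _ hy hz =>
        obtain ⟨t1, ht1, e1⟩ := hy
        obtain ⟨t2, ht2, e2⟩ := hz
        exact ⟨t1 + t2, add_mem ht1 ht2, by rw [map_add, e1, e2]⟩
      | smul c y _ hy =>
        obtain ⟨t, ht, e⟩ := hy
        exact ⟨c • t, Submodule.smul_mem _ c ht, by rw [map_smul, e]⟩
    obtain ⟨t, ht1, ht2⟩ := hlift x hx1
    -- step 3: w := freeMap f t lies in the syzygy of N and in I·(N →₀ A)
    have hw_syz : freeMap f t ∈ syzygy (A := A) N := by
      simp only [syzygy, LinearMap.mem_ker]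
      rw [freeCover_freeMap', ht2, hfx]
    have hw1 : freeMap f t ∈ smulPow I (N →₀ A) 1 :=
      apply_mem_smulPow I (freeMap f) 1 t ht1
    -- step 4: its class lies in torOne I N
    have hcw : (Submodule.Quotient.mk (⟨freeMap f t, hw_syz⟩ : ↥(syzygy (A := A) N)) :
        TorZeroObj I ↥(syzygy (A := A) N)) ∈ torOne I N := by
      simp only [torOne, LinearMap.mem_ker, torOneCompare, torZeroMap,
        Submodule.mapQ_apply]
      exact (Submodule.Quotient.mk_eq_zero _).mpr hw1
    -- step 5: use surjectivity of torOneMap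
    obtain ⟨d, hd⟩ := h1 ⟨_, hcw⟩
    obtain ⟨s₀, hs₀⟩ := Submodule.Quotient.mk_surjective _ d.1
    have hs1 : (s₀ : M →₀ A) ∈ smulPow I (M →₀ A) 1 := by
      have hd2 := d.2
      rw [← hs₀] at hd2
      simp only [torOne, LinearMap.mem_ker, torOneCompare, torZeroMap,
        Submodule.mapQ_apply] at hd2
      exact (Submodule.Quotient.mk_eq_zero _).mp hd2
    have hd' : syzygyMap f s₀ - ⟨freeMap f t, hw_syz⟩ ∈
        smulPow I ↥(syzygy (A := A) N) 1 := by
      have h2 := congrArg Subtype.val hd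
      simp only [torOneMap, LinearMap.restrict_apply] at h2
      rw [← hs₀] at h2
      simp only [torZeroMap, Submodule.mapQ_apply] at h2
      exact (Submodule.Quotient.eq _).mp h2
    -- step 6: t' := t - s₀
    set t' : M →₀ A := t - (s₀ : M →₀ A) with ht'def
    have ht'1 : t' ∈ smulPow I (M →₀ A) 1 := sub_mem ht1 hs1
    have ht'2 : freeCover M t' = x := by
      rw [ht'def, map_sub, ht2]
      have : freeCover M (s₀ : M →₀ A) = 0 := s₀.2
      rw [this, sub_zero]
    have ht'3 : freeMap f t' =
        -((syzygyMap f s₀ - ⟨freeMap f t, hw_syz⟩ : ↥(syzygy (A := A) N)) : N →₀ A) := by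
      have hval : ((syzygyMap f s₀ : ↥(syzygy (A := A) N)) : N →₀ A)
          = freeMap f (s₀ : M →₀ A) := rfl
      rw [ht'def, map_sub]
      push_cast [hval]
      abel
    -- step 7: decompose x
    have hdecomp : π t' + σ (freeMap f t') = t' := by
      have : π t' = t' - σ (freeMap f t') := rfl
      rw [this]; abel
    have hterm1 : freeCover M (π t') ∈ J := by
      refine lands_in_span I f ((freeCover M).comp π) ?_ t' ht'1
      intro u
      show f (freeCover M (π u)) = 0
      rw [← freeCover_freeMap', hπker, map_zero]
    have hterm2 : freeCover M (σ (freeMap f t')) ∈ J := by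
      have hcomp : ∀ k : ↥(syzygy (A := A) N),
          f (freeCover M (σ (k : N →₀ A))) = 0 := by
        intro k
        rw [← freeCover_freeMap', hσ]
        exact k.2
      have := lands_in_span I f
        ((freeCover M).comp (σ.comp (syzygy (A := A) N).subtype)) hcomp _ hd'
      rw [ht'3, map_neg, map_neg]
      exact neg_mem this
    have : x = freeCover M (π t') + freeCover M (σ (freeMap f t')) := by
      rw [← map_add, hdecomp, ht'2]
    rw [this]
    exact add_mem hterm1 hterm2
  -- iterate: ker f ⊆ Iⁿ M
  have hker_le : ∀ n, ∀ x : M, f x = 0 → x ∈ smulPow I M n := by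
    intro n
    induction n with
    | zero => intro x _; exact Submodule.mem_top
    | succ n ih =>
      intro x hx
      have hle : J ≤ smulPow I M (n + 1) := by
        rw [hJdef, smulPow_succ']
        apply Submodule.span_le.mpr
        rintro _ ⟨a, ha, k, hk, rfl⟩
        exact Submodule.subset_span ⟨a, ha, k, ih k (LinearMap.mem_ker.mp hk), rfl⟩
      exact hle (hJ x hx)
  intro a b hab
  have hz : f (a - b) = 0 := by rw [map_sub, hab, sub_self]
  exact sub_eq_zero.mp (hMh _ (fun n => hker_le n _ hz))

end InjLemma

/-- Lemma 4.3, isomorphism: let `G` be a finitely generated pro-`p` group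
and `f : M → N` a morphism of complete `Z_p[[G]]`-modules.  If
`Tor_q^{Z_p[[G]]}(F_p, f)` is an isomorphism for `q = 0` and surjective for `q = 1`,
then `f` is an isomorphism. -/
theorem complete_iso_of_tor_conditions
    (p : ℕ) [Fact p.Prime]
    (G : Type) [Group G] [TopologicalSpace G] [IsTopologicalGroup G]
    [CompactSpace G] [TotallyDisconnectedSpace G]
    (hpro : IsProP p G) (hfg : IsTopFG G)
    (M N : Type) [AddCommGroup M] [Module ↥(CompletedGroupRing p G) M]
    [AddCommGroup N] [Module ↥(CompletedGroupRing p G) N]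
    (hM : IsCompleteMod (augIdeal p G) M) (hN : IsCompleteMod (augIdeal p G) N)
    (f : M →ₗ[↥(CompletedGroupRing p G)] N)
    (h0 : Function.Bijective (torZeroMap (augIdeal p G) f))
    (h1 : Function.Surjective (torOneMap (augIdeal p G) f)) :
    Function.Bijective f := by
  have hstep : ∀ y : N, ∃ m : M, y - f m ∈ smulPow (augIdeal p G) N 1 := by
    intro y
    obtain ⟨c, hc⟩ := h0.2 (Submodule.Quotient.mk y)
    obtain ⟨m, rfl⟩ := Submodule.Quotient.mk_surjective _ c
    refine ⟨m, ?_⟩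
    simp only [torZeroMap, Submodule.mapQ_apply] at hc
    have h := (Submodule.Quotient.eq _).mp hc
    rw [← neg_sub]
    exact neg_mem h
  have hsurj : Function.Surjective f :=
    surj_of_step (augIdeal p G) f hM.2 hN.1 hstep
  exact ⟨inj_of_tor (augIdeal p G) f hM.1 h0 h1 hsurj, hsurj⟩

end
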